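/- With the tracking sequence v₁,…,v_k as above and u_i defined as the vertex among {v₁,…,v_i} with the largest f_i-value, the following invariant holds for all i: f_k(u_i) ≤ f₁(v₁) + 2ε, and whenever v_i = u_i one additionally has f₁(v_i) ≤ f₁(v₁); here ε bounds the total perturbation, ‖f₁ − f_k‖_∞ ≤ ε and f_k(x) ≥ f₁(x) for all x with f_k(x) − f₁(x) ≤ 2ε. -/

import Mathlib

open Classical in
/-- Rank of vertex `v` in the ordering of vertices by ascending `f`-value. -/
noncomputable def rankOf {V : Type*} [Fintype V] (f : V → ℝ) (v : V) : ℕ :=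
  (Finset.univ.filter fun u => f u ≤ f v).card

/-- Minimal vertex perturbation: exactly one vertex changes value, and the rank
orderings either coincide or differ by one adjacent transposition. -/
def MinimalPerturbation {V : Type*} [Fintype V] (f f' : V → ℝ) : Prop :=
  (∃! v, f v ≠ f' v) ∧
  (rankOf f = rankOf f' ∨
    ∃ v u : V, u ≠ v ∧ f v ≠ f' v ∧
      ((rankOf f v : ℤ) - rankOf f u).natAbs = 1 ∧
      rankOf f v = rankOf f' u ∧ rankOf f u = rankOf f' v ∧
      ∀ w, w ≠ u → w ≠ v → rankOf f w = rankOf f' w)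

/-- with the tracking sequence `v₁,…,v_k` and `u_i` the vertex among
`{v₁,…,v_i}` of largest `f_i`-value, one has `f_k(u_i) ≤ f₁(v₁) + 2ε` for all `i`, and
whenever `v_i = u_i` additionally `f₁(v_i) ≤ f₁(v₁)`; here the perturbation satisfies
`‖f₁ − f_k‖_∞ ≤ ε`, values are nondecreasing, and each total increase is at most `2ε`. -/
theorem stmt_5 {V : Type*} [Fintype V] {k : ℕ} (ε : ℝ)
    (f : Fin (k + 1) → V → ℝ) (v u : Fin (k + 1) → V)
    (hinj : ∀ i, Function.Injective (f i))
    (hstep : ∀ i : Fin k, MinimalPerturbation (f i.castSucc) (f i.succ))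
    (hmono : ∀ (i : Fin k) (x : V), f i.castSucc x ≤ f i.succ x)
    (hsup : ∀ x, |f 0 x - f (Fin.last k) x| ≤ ε)
    (htot : ∀ x, f (Fin.last k) x - f 0 x ≤ 2 * ε)
    (ha : ∀ x y : V, f 0 x < f 0 y → f (Fin.last k) x < f (Fin.last k) y →
      ∀ i, f i x < f i y)
    (hb : ∀ x y : V, f 0 x < f 0 y → f (Fin.last k) y < f (Fin.last k) x →
      ∃ i : Fin (k + 1), (∀ j, j < i → f j x < f j y) ∧ ∀ j, i ≤ j → f j y < f j x)
    (htrack : ∀ i : Fin k, v i.succ ≠ v i.castSucc ↔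
      ((f i.castSucc (v i.castSucc) < f i.castSucc (v i.succ) ∧
        f i.succ (v i.succ) < f i.succ (v i.castSucc)) ∨
       (f i.castSucc (v i.succ) < f i.castSucc (v i.castSucc) ∧
        f i.succ (v i.castSucc) < f i.succ (v i.succ))))
    (hu : ∀ i : Fin (k + 1), (∃ j ≤ i, u i = v j) ∧ ∀ j ≤ i, f i (v j) ≤ f i (u i)) :
    ∀ i : Fin (k + 1), f (Fin.last k) (u i) ≤ f 0 (v 0) + 2 * ε ∧
      (v i = u i → f 0 (v i) ≤ f 0 (v 0)) := by
  -- monotonicity in the time index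
  have hm : ∀ x : V, Monotone fun i : Fin (k + 1) => f i x := by
    intro x
    rw [Fin.monotone_iff_le_succ]
    intro i
    exact hmono i x
  have hεnn : (0 : ℝ) ≤ ε := le_trans (abs_nonneg _) (hsup (v 0))
  -- f_k(x) ≤ f_0(x) + ε
  have hk0 : ∀ x : V, f (Fin.last k) x ≤ f 0 x + ε := by
    intro x
    have h1 : f 0 x ≤ f (Fin.last k) x := hm x (Fin.zero_le _)
    have h2 := hsup x
    rw [abs_sub_comm, abs_le] at h2
    linarith [h2.2]
  -- single-crossing: once y drops below x it stays below
  have cross : ∀ x y : V, f 0 x < f 0 y → ∀ a b : Fin (k + 1), a ≤ b →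
      f a y < f a x → f b y < f b x := by
    intro x y hxy a b hab hay
    rcases lt_trichotomy (f (Fin.last k) x) (f (Fin.last k) y) with h | h | h
    · exact absurd (ha x y hxy h a) (not_lt.mpr hay.le)
    · exact absurd (hinj _ h) (fun e => absurd (e ▸ hxy) (lt_irrefl _))
    · obtain ⟨m, h1, h2⟩ := hb x y hxy h
      by_cases hma : a < m
      · exact absurd (h1 a hma) (not_lt.mpr hay.le)
      · exact h2 b (le_trans (not_lt.mp hma) hab)
  -- an order flip between times a ≤ b forces f 0 y < f 0 x
  have flip : ∀ x y : V, ∀ a b : Fin (k + 1), a ≤ b →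
      f a y < f a x → f b x < f b y → f 0 y < f 0 x := by
    intro x y a b hab h1 h2
    rcases lt_trichotomy (f 0 x) (f 0 y) with h | h | h
    · exact absurd (cross x y h a b hab h1) (not_lt.mpr h2.le)
    · exact absurd (congrArg (f a) (hinj 0 h)) (ne_of_gt h1)
    · exact h
  -- key invariant
  have key : ∀ i : Fin (k + 1), f 0 (u i) ≤ f 0 (v 0) := by
    intro i
    induction i using Fin.induction with
    | zero =>
        obtain ⟨⟨j, hj, hje⟩, _⟩ := hu 0
        have : j = 0 := le_antisymm hj (Fin.zero_le _)
        rw [hje, this]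
    | succ i ih =>
        by_cases heq : u i.succ = u i.castSucc
        · rw [heq]; exact ih
        obtain ⟨⟨j, hj, hje⟩, hmax'⟩ := hu i.succ
        obtain ⟨⟨j₀, hj₀, hje₀⟩, hmax⟩ := hu i.castSucc
        -- the old max is still dominated at time i.succ
        have hold : f i.succ (u i.castSucc) ≤ f i.succ (u i.succ) := by
          rw [hje₀]
          exact hmax' j₀ (le_trans hj₀ (Fin.castSucc_lt_succ : i.castSucc < i.succ).le)
        have hold' : f i.succ (u i.castSucc) < f i.succ (u i.succ) :=
          lt_of_le_of_ne hold (fun e => heq (hinj _ e).symm)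
        -- find a time-i bound: f i.castSucc (u i.succ) < f i.castSucc (u i.castSucc)
        have hnew : f i.castSucc (u i.succ) < f i.castSucc (u i.castSucc) := by
          rcases lt_or_eq_of_le hj with hlt | hrfl
          · -- u i.succ = v j with j ≤ i.castSucc : old tracked vertex
            have hj' : j ≤ i.castSucc := Fin.le_castSucc_iff.mpr hlt
            have h1 : f i.castSucc (u i.succ) ≤ f i.castSucc (u i.castSucc) := by
              rw [hje]; exact hmax j hj'
            refine lt_of_le_of_ne h1 (fun e => heq (hinj _ e))
          · -- u i.succ = v i.succ, a newly tracked vertex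
            rw [hrfl] at hje
            by_cases hvv : v i.succ = v i.castSucc
            ·
              have h1 : f i.castSucc (u i.succ) ≤ f i.castSucc (u i.castSucc) := by
                rw [hje, hvv]; exact hmax i.castSucc le_rfl
              refine lt_of_le_of_ne h1 (fun e => heq (hinj _ e))
            · rcases (htrack i).mp hvv with hc | hc
              · -- case A impossible: new track is below old track, can't be the max
                exfalso
                have := hmax' i.castSucc (Fin.castSucc_lt_succ : i.castSucc < i.succ).le
                rw [← hje] at hc
                exact absurd this (not_le.mpr hc.2)
              · -- case B: new track rose past old track
                calc f i.castSucc (u i.succ) = f i.castSucc (v i.succ) := by rw [hje]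
                  _ < f i.castSucc (v i.castSucc) := hc.1
                  _ ≤ f i.castSucc (u i.castSucc) := hmax i.castSucc le_rfl
        have := flip (u i.castSucc) (u i.succ) i.castSucc i.succ
          (Fin.castSucc_lt_succ : i.castSucc < i.succ).le hnew hold'
        exact le_trans this.le ih
  intro i
  refine ⟨?_, fun hvu => hvu ▸ key i⟩
  calc f (Fin.last k) (u i) ≤ f 0 (u i) + ε := hk0 _
    _ ≤ f 0 (v 0) + ε := by linarith [key i]
    _ ≤ f 0 (v 0) + 2 * ε := by linarith
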